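/- (De La Vallée Poussin, necessity, for $d$-dimensional arrays.) Let $\{X_{\mathbf{n}}, \mathbf{n}\in\mathbb{Z}^d_+\}$ be a $d$-dimensional array of real random variables that is uniformly integrable in the Cesàro sense. Then there exists a measurable function $\phi:[0,\infty)\to[0,\infty)$ with $\phi(0)=0$ such that $\phi(t)/t$ is increasing, $\phi(t)/t\to\infty$ as $t\to\infty$, and $\sup_{\mathbf{n}\succ\mathbf{1}}|\mathbf{n}|^{-1}\sum_{\mathbf{i}\prec\mathbf{n}}\mathbb{E}(\phi(|X_{\mathbf{i}}|))\le 1$. -/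

import Mathlib

open MeasureTheory Filter Finset
open scoped ENNReal

private noncomputable def vpPhi (a : ℕ → ℝ) (t : ℝ) : ℝ :=
  ∑ k ∈ Finset.range ⌈t⌉₊, max (t - a k) 0

private lemma vpPhi_eq_sum {a : ℕ → ℝ} (ha : ∀ k : ℕ, (k : ℝ) + 1 ≤ a k)
    {t : ℝ} {N : ℕ} (hN : ⌈t⌉₊ ≤ N) :
    vpPhi a t = ∑ k ∈ Finset.range N, max (t - a k) 0 := by
  refine Finset.sum_subset (Finset.range_subset_range.2 hN) ?_
  intro k _ hk
  have hk' : ⌈t⌉₊ ≤ k := le_of_not_gt (fun h => hk (Finset.mem_range.2 h))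
  have ht : t ≤ (k : ℝ) := le_trans (Nat.le_ceil t) (by exact_mod_cast hk')
  have h2 := ha k
  exact max_eq_right (by linarith)

private lemma vpPhi_nonneg (a : ℕ → ℝ) (t : ℝ) : 0 ≤ vpPhi a t :=
  Finset.sum_nonneg fun _ _ => le_max_right _ _

private lemma vpPhi_mono {a : ℕ → ℝ} (ha : ∀ k : ℕ, (k : ℝ) + 1 ≤ a k) :
    Monotone (vpPhi a) := by
  intro s t hst
  rw [vpPhi_eq_sum ha (le_max_left ⌈s⌉₊ ⌈t⌉₊), vpPhi_eq_sum ha (le_max_right ⌈s⌉₊ ⌈t⌉₊)]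
  exact Finset.sum_le_sum fun k _ => max_le_max (by linarith) le_rfl

private lemma vp_ratio {s t c : ℝ} (hs : 0 < s) (hst : s ≤ t) (hc : 0 ≤ c) :
    max (s - c) 0 / s ≤ max (t - c) 0 / t := by
  have ht : 0 < t := lt_of_lt_of_le hs hst
  rcases le_or_gt s c with h | h
  · rw [max_eq_right (by linarith)]
    have : (0:ℝ) ≤ max (t - c) 0 / t := div_nonneg (le_max_right _ _) ht.le
    simpa using this
  · rw [max_eq_left (by linarith), max_eq_left (by linarith)]
    rw [div_le_div_iff₀ hs ht]
    nlinarith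

/-- Theorem 3.2 (ii): de La Vallée Poussin necessity for Cesàro uniform integrability of
d-dimensional arrays; moreover φ can be chosen with φ(t)/t increasing. -/
theorem de_la_vallee_poussin_necessity
    {Ω : Type*} [MeasurableSpace Ω]
    (P : Measure Ω) [IsProbabilityMeasure P]
    (d : ℕ) (hd : 0 < d)
    (X : (Fin d → ℕ) → Ω → ℝ)
    (hmeas : ∀ i, Measurable (X i))
    (hint : ∀ i, Integrable (X i) P)
    -- Cesàro uniform integrability of {X_n}
    (hUI : ∀ ε > (0 : ℝ), ∃ a : ℝ, 0 < a ∧ ∀ b ≥ a, ∀ n : Fin d → ℕ, (∀ j, 1 ≤ n j) →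
      (1 / ∏ j, (n j : ℝ)) * ∑ i ∈ Finset.Icc 1 n,
        ∫ ω, Set.indicator {ω | b < |X i ω|} (fun ω => |X i ω|) ω ∂P ≤ ε) :
    ∃ φ : ℝ → ℝ, Measurable φ ∧ φ 0 = 0 ∧ (∀ t, 0 ≤ t → 0 ≤ φ t) ∧
      MonotoneOn (fun t => φ t / t) (Set.Ioi (0 : ℝ)) ∧
      Tendsto (fun t => φ t / t) atTop atTop ∧
      ∀ n : Fin d → ℕ, (∀ j, 1 ≤ n j) →
        (1 / ∏ j, (n j : ℝ)) * ∑ i ∈ Finset.Icc 1 n, ∫ ω, φ (|X i ω|) ∂P ≤ 1 := by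
  have hhalf : ∀ k : ℕ, (0:ℝ) < (1/2)^(k+1) := fun k => by positivity
  choose c hc0 hcUI using fun k : ℕ => hUI ((1/2)^(k+1)) (hhalf k)
  set a : ℕ → ℝ := fun k => max (c k) ((k : ℝ) + 1) with ha_def
  have ha : ∀ k : ℕ, (k : ℝ) + 1 ≤ a k := fun k => le_max_right _ _
  have ha0 : ∀ k, 0 < a k := fun k => lt_of_lt_of_le (by positivity) (ha k)
  have hac : ∀ k, c k ≤ a k := fun k => le_max_left _ _
  set φ := vpPhi a with hφ_def
  have hmono : Monotone φ := vpPhi_mono ha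
  have hφmeas : Measurable φ := hmono.measurable
  have hφ0 : φ 0 = 0 := by simp [hφ_def, vpPhi]
  have hφnn : ∀ t, 0 ≤ t → 0 ≤ φ t := fun t _ => vpPhi_nonneg a t
  refine ⟨φ, hφmeas, hφ0, hφnn, ?_, ?_, ?_⟩
  · -- monotone ratio
    intro s hs t ht hst
    simp only [Set.mem_Ioi] at hs ht
    show φ s / s ≤ φ t / t
    rw [hφ_def, vpPhi_eq_sum ha (le_max_left ⌈s⌉₊ ⌈t⌉₊),
      vpPhi_eq_sum ha (le_max_right ⌈s⌉₊ ⌈t⌉₊), Finset.sum_div, Finset.sum_div]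
    exact Finset.sum_le_sum fun k _ => vp_ratio hs hst (ha0 k).le
  · -- tendsto atTop
    rw [tendsto_atTop]
    intro b
    obtain ⟨m, hm⟩ := exists_nat_ge b
    set A := ∑ k ∈ Finset.range (2*m), a k with hA_def
    have hA0 : 0 ≤ A := Finset.sum_nonneg fun k _ => (ha0 k).le
    filter_upwards [eventually_ge_atTop (max (2*A) 1)] with t ht
    have ht1 : (1:ℝ) ≤ t := le_trans (le_max_right _ _) ht
    have ht0 : 0 < t := by linarith
    have htA : 2*A ≤ t := le_trans (le_max_left _ _) ht
    have key : (m:ℝ) * t ≤ φ t := by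
      have h1 : φ t = ∑ k ∈ Finset.range (max ⌈t⌉₊ (2*m)), max (t - a k) 0 :=
        vpPhi_eq_sum ha (le_max_left _ _)
      have h2 : ∑ k ∈ Finset.range (2*m), max (t - a k) 0
          ≤ ∑ k ∈ Finset.range (max ⌈t⌉₊ (2*m)), max (t - a k) 0 :=
        Finset.sum_le_sum_of_subset_of_nonneg
          (Finset.range_subset_range.2 (le_max_right _ _)) (fun k _ _ => le_max_right _ _)
      have h3 : ∀ k ∈ Finset.range (2*m), t/2 ≤ max (t - a k) 0 := by
        intro k hk
        have hkA : a k ≤ A := Finset.single_le_sum (fun j _ => (ha0 j).le) hk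
        calc t/2 ≤ t - a k := by linarith
          _ ≤ max (t - a k) 0 := le_max_left _ _
      calc (m:ℝ) * t = (2*m : ℕ) * (t/2) := by push_cast; ring
        _ = ∑ _k ∈ Finset.range (2*m), (t/2) := by
            rw [Finset.sum_const, Finset.card_range, nsmul_eq_mul]
        _ ≤ ∑ k ∈ Finset.range (2*m), max (t - a k) 0 := Finset.sum_le_sum h3
        _ ≤ _ := h2
        _ = φ t := h1.symm
    have : (m:ℝ) ≤ φ t / t := (le_div_iff₀ ht0).2 key
    linarith
  · -- the Cesàro bound
    intro n hn
    set Nn : ℝ := ∏ j, (n j : ℝ) with hNn_def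
    have hNn0 : 0 < Nn := Finset.prod_pos fun j _ => by
      have := hn j; positivity
    set S := Finset.Icc (1 : Fin d → ℕ) n with hS_def
    set g : ℕ → (Fin d → ℕ) → Ω → ℝ := fun k i ω => max (|X i ω| - a k) 0 with hg_def
    have hg_meas : ∀ k i, Measurable fun ω => ENNReal.ofReal (g k i ω) := fun k i =>
      (((hmeas i).abs.sub measurable_const).max measurable_const).ennreal_ofReal
    have hind_int : ∀ k i,
        Integrable (Set.indicator {ω | a k < |X i ω|} (fun ω => |X i ω|)) P := fun k i =>
      ((hint i).abs).indicator (measurableSet_lt measurable_const (hmeas i).abs)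
    have hind_nn : ∀ k i (ω : Ω),
        0 ≤ Set.indicator {ω | a k < |X i ω|} (fun ω => |X i ω|) ω := fun k i ω =>
      Set.indicator_nonneg (fun x _ => abs_nonneg _) ω
    have hg_le_ind : ∀ k i ω,
        g k i ω ≤ Set.indicator {ω | a k < |X i ω|} (fun ω => |X i ω|) ω := by
      intro k i ω
      by_cases h : a k < |X i ω|
      · have hmem : ω ∈ {ω | a k < |X i ω|} := h
        rw [Set.indicator_of_mem hmem]
        have := (ha0 k).le
        exact max_le (by linarith) (abs_nonneg _)
      · push_neg at h
        have hmem : ω ∉ {ω | a k < |X i ω|} := by simpa using h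
        rw [Set.indicator_of_notMem hmem]
        simp [hg_def, max_eq_right (by linarith : |X i ω| - a k ≤ 0)]
    have hpt : ∀ t : ℝ, ENNReal.ofReal (φ t) = ∑' k, ENNReal.ofReal (max (t - a k) 0) := by
      intro t
      rw [tsum_eq_sum (s := Finset.range ⌈t⌉₊) ?_]
      · rw [hφ_def, vpPhi]
        exact ENNReal.ofReal_sum_of_nonneg (fun k _ => le_max_right _ _)
      · intro k hk
        have hk' : ⌈t⌉₊ ≤ k := le_of_not_gt fun h => hk (Finset.mem_range.2 h)
        have htk : t ≤ (k : ℝ) := le_trans (Nat.le_ceil t) (by exact_mod_cast hk')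
        have h2 := ha k
        rw [max_eq_right (by linarith), ENNReal.ofReal_zero]
    set L : (Fin d → ℕ) → ℝ≥0∞ := fun i => ∫⁻ ω, ENNReal.ofReal (φ (|X i ω|)) ∂P with hL_def
    have hL : ∀ i, L i = ∑' k, ∫⁻ ω, ENNReal.ofReal (g k i ω) ∂P := by
      intro i
      calc L i = ∫⁻ ω, ∑' k, ENNReal.ofReal (g k i ω) ∂P :=
            lintegral_congr fun ω => hpt _
        _ = ∑' k, ∫⁻ ω, ENNReal.ofReal (g k i ω) ∂P :=
            lintegral_tsum fun k => (hg_meas k i).aemeasurable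
    have hk_bound : ∀ k, ∑ i ∈ S, ∫⁻ ω, ENNReal.ofReal (g k i ω) ∂P
        ≤ ENNReal.ofReal (Nn * (1/2)^(k+1)) := by
      intro k
      have h1 : ∀ i, ∫⁻ ω, ENNReal.ofReal (g k i ω) ∂P
          ≤ ENNReal.ofReal (∫ ω, Set.indicator {ω | a k < |X i ω|} (fun ω => |X i ω|) ω ∂P) := by
        intro i
        rw [ofReal_integral_eq_lintegral_ofReal (hind_int k i)
          (Filter.Eventually.of_forall (hind_nn k i))]
        exact lintegral_mono fun ω => ENNReal.ofReal_le_ofReal (hg_le_ind k i ω)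
      have hUIb := hcUI k (a k) (hac k) n hn
      have hsum_le : ∑ i ∈ S,
          ∫ ω, Set.indicator {ω | a k < |X i ω|} (fun ω => |X i ω|) ω ∂P
          ≤ Nn * (1/2)^(k+1) := by
        rw [one_div, inv_mul_le_iff₀ hNn0] at hUIb
        exact hUIb
      calc ∑ i ∈ S, ∫⁻ ω, ENNReal.ofReal (g k i ω) ∂P
          ≤ ∑ i ∈ S, ENNReal.ofReal
            (∫ ω, Set.indicator {ω | a k < |X i ω|} (fun ω => |X i ω|) ω ∂P) :=
            Finset.sum_le_sum fun i _ => h1 i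
        _ = ENNReal.ofReal (∑ i ∈ S,
            ∫ ω, Set.indicator {ω | a k < |X i ω|} (fun ω => |X i ω|) ω ∂P) :=
            (ENNReal.ofReal_sum_of_nonneg fun i _ =>
              integral_nonneg (hind_nn k i)).symm
        _ ≤ ENNReal.ofReal (Nn * (1/2)^(k+1)) := ENNReal.ofReal_le_ofReal hsum_le
    have hgeom : ∑' k : ℕ, ENNReal.ofReal ((1/2:ℝ)^(k+1)) ≤ 1 := by
      have h12 : ENNReal.ofReal ((1:ℝ)/2) = 1/2 := by
        rw [ENNReal.ofReal_div_of_pos (by norm_num), ENNReal.ofReal_one,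
          ENNReal.ofReal_ofNat]
      have : ∑' k : ℕ, ENNReal.ofReal ((1/2:ℝ)^(k+1))
          = ∑' k : ℕ, ((1/2 : ℝ≥0∞))^k * (1/2) := by
        refine tsum_congr fun k => ?_
        rw [ENNReal.ofReal_pow (by norm_num : (0:ℝ) ≤ 1/2), h12, pow_succ]
      rw [this, ENNReal.tsum_mul_right, ENNReal.tsum_geometric]
      rw [one_div, ENNReal.one_sub_inv_two, inv_inv]
      rw [ENNReal.mul_inv_cancel (by norm_num) (by norm_num)]
    have hLS : ∑ i ∈ S, L i ≤ ENNReal.ofReal Nn := by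
      calc ∑ i ∈ S, L i = ∑' k, ∑ i ∈ S, ∫⁻ ω, ENNReal.ofReal (g k i ω) ∂P := by
            simp_rw [hL]
            exact (Summable.tsum_finsetSum (fun i _ => ENNReal.summable)).symm
        _ ≤ ∑' k, ENNReal.ofReal (Nn * (1/2)^(k+1)) := ENNReal.tsum_le_tsum hk_bound
        _ = ENNReal.ofReal Nn * ∑' k : ℕ, ENNReal.ofReal ((1/2:ℝ)^(k+1)) := by
            simp_rw [ENNReal.ofReal_mul hNn0.le]
            exact ENNReal.tsum_mul_left
        _ ≤ ENNReal.ofReal Nn * 1 := by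
            exact mul_le_mul_right hgeom _
        _ = ENNReal.ofReal Nn := mul_one _
    have hLfin : ∀ i ∈ S, L i ≠ ⊤ := by
      intro i hi
      exact ne_top_of_le_ne_top ENNReal.ofReal_ne_top
        (le_trans (Finset.single_le_sum (fun j _ => zero_le) hi) hLS)
    have hInt_eq : ∀ i, ∫ ω, φ (|X i ω|) ∂P = (L i).toReal := by
      intro i
      exact integral_eq_lintegral_of_nonneg_ae
        (Filter.Eventually.of_forall fun ω => hφnn _ (abs_nonneg _))
        (hφmeas.comp (hmeas i).abs).aestronglyMeasurable
    have hsum : ∑ i ∈ S, ∫ ω, φ (|X i ω|) ∂P ≤ Nn := by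
      calc ∑ i ∈ S, ∫ ω, φ (|X i ω|) ∂P = ∑ i ∈ S, (L i).toReal := by
            exact Finset.sum_congr rfl fun i _ => hInt_eq i
        _ = (∑ i ∈ S, L i).toReal := (ENNReal.toReal_sum hLfin).symm
        _ ≤ (ENNReal.ofReal Nn).toReal :=
            ENNReal.toReal_mono ENNReal.ofReal_ne_top hLS
        _ = Nn := ENNReal.toReal_ofReal hNn0.le
    have heq : (1 / Nn) * ∑ i ∈ S, ∫ ω, φ (|X i ω|) ∂P
        = (∑ i ∈ S, ∫ ω, φ (|X i ω|) ∂P) / Nn := by ring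
    calc (1 / Nn) * ∑ i ∈ S, ∫ ω, φ (|X i ω|) ∂P
        = (∑ i ∈ S, ∫ ω, φ (|X i ω|) ∂P) / Nn := heq
      _ ≤ 1 := (div_le_one hNn0).2 hsum
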